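/- Let (V1,…,Vn) be a U_n-twisted isometry on H and A ⊆ {1,…,n}. Then W_A = ⋂_{i∈A} ker V_i* reduces each U_{ij}, and moreover U_{ij}(W_A) = W_A for all i ≠ j. -/

import Mathlib

open ContinuousLinearMap

theorem stmt_6 {H : Type*} [NormedAddCommGroup H] [InnerProductSpace ℂ H] [CompleteSpace H]
    {n : ℕ} (U : Fin n → Fin n → (H →L[ℂ] H)) (V : Fin n → (H →L[ℂ] H))
    (hUu : ∀ i j, i ≠ j → U i j * adjoint (U i j) = 1 ∧ adjoint (U i j) * U i j = 1)
    (hUsym : ∀ i j, i ≠ j → U j i = adjoint (U i j))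
    (hUcomm : ∀ i j s t, i ≠ j → s ≠ t → U i j * U s t = U s t * U i j)
    (hViso : ∀ i, adjoint (V i) * V i = 1)
    (hVU : ∀ p s t, s ≠ t → V p * U s t = U s t * V p)
    (htw : ∀ i j, i ≠ j → adjoint (V i) * V j = adjoint (U i j) * (V j * adjoint (V i)))
    (A : Set (Fin n))
    (W : Submodule ℂ H) (hW : W = ⨅ i ∈ A, LinearMap.ker (adjoint (V i)).toLinearMap) :
    ∀ i j, i ≠ j →
      (∀ x ∈ W, U i j x ∈ W ∧ adjoint (U i j) x ∈ W) ∧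
        Submodule.map (U i j).toLinearMap W = W := by
  intro i j hij
  have memW : ∀ x, x ∈ W ↔ ∀ k ∈ A, adjoint (V k) x = 0 := by
    intro x
    simp [hW, Submodule.mem_iInf, LinearMap.mem_ker]
  -- commutation: V_k* commutes with U i j and with (U i j)*
  have key1 : ∀ k, adjoint (V k) * U i j = U i j * adjoint (V k) := by
    intro k
    have h := hVU k j i hij.symm
    have h2 := congrArg adjoint h
    rw [show (V k * U j i : H →L[ℂ] H) = (V k).comp (U j i) from rfl,
        show (U j i * V k : H →L[ℂ] H) = (U j i).comp (V k) from rfl,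
        adjoint_comp, adjoint_comp, hUsym i j hij, adjoint_adjoint] at h2
    exact h2.symm
  have key2 : ∀ k, adjoint (V k) * adjoint (U i j) = adjoint (U i j) * adjoint (V k) := by
    intro k
    have h := hVU k i j hij
    have h2 := congrArg adjoint h
    rw [show (V k * U i j : H →L[ℂ] H) = (V k).comp (U i j) from rfl,
        show (U i j * V k : H →L[ℂ] H) = (U i j).comp (V k) from rfl,
        adjoint_comp, adjoint_comp] at h2
    exact h2.symm
  have hinv : ∀ x ∈ W, U i j x ∈ W ∧ adjoint (U i j) x ∈ W := by
    intro x hx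
    rw [memW] at hx
    constructor
    · rw [memW]
      intro k hk
      have := congrFun (congrArg DFunLike.coe (key1 k)) x
      simp only [mul_apply_eq_comp] at this
      rw [this, hx k hk, map_zero]
    · rw [memW]
      intro k hk
      have := congrFun (congrArg DFunLike.coe (key2 k)) x
      simp only [mul_apply_eq_comp] at this
      rw [this, hx k hk, map_zero]
  refine ⟨hinv, ?_⟩
  apply le_antisymm
  · rintro _ ⟨x, hx, rfl⟩
    exact (hinv x hx).1
  · intro x hx
    refine ⟨adjoint (U i j) x, (hinv x hx).2, ?_⟩
    have := congrFun (congrArg DFunLike.coe (hUu i j hij).1) x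
    simpa [mul_apply] using this
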